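/- Let n ≥ 1 and let M be the n×n matrix with M_{11} = -1, M_{ii} = -2 for 2 ≤ i ≤ n-1, M_{nn} = -3, M_{i,i+1} = M_{i+1,i} = -1, and zeros elsewhere. Then the first row of M⁻¹ is (-(2n-1)/2, (2n-3)/2, -(2n-5)/2, ..., (-1)^n/2) and the last row is ((-1)^n/2, (-1)^{n-1}/2, ..., 1/2, -1/2). -/
import Mathlib

private def Naux (n : ℕ) : Matrix (Fin n) (Fin n) ℚ :=
  fun i j => (-1) ^ ((i : ℕ) + (j : ℕ) + 1) *
    (2 * (n : ℚ) - 2 * ((max (i : ℕ) (j : ℕ) : ℕ) : ℚ) - 1) / 2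

/-- For the n×n chain matrix with diagonal (-1, -2, ..., -2, -3) and
off-diagonal neighbouring entries -1, the first row of M⁻¹ is
(-(2n-1)/2, (2n-3)/2, ..., (-1)^n/2) and the last row is
((-1)^n/2, (-1)^{n-1}/2, ..., 1/2, -1/2). -/
theorem stmt6 (n : ℕ) (hn : 1 ≤ n) (M : Matrix (Fin n) (Fin n) ℚ)
    (hfirst : M ⟨0, by omega⟩ ⟨0, by omega⟩ = -1)
    (hdiag : ∀ i : Fin n, 1 ≤ (i : ℕ) → (i : ℕ) ≤ n - 2 → M i i = -2)
    (hlast : M ⟨n - 1, by omega⟩ ⟨n - 1, by omega⟩ = -3)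
    (hoff : ∀ i j : Fin n, (i : ℕ) + 1 = (j : ℕ) → M i j = -1 ∧ M j i = -1)
    (hzero : ∀ i j : Fin n, (i : ℕ) ≠ (j : ℕ) → (i : ℕ) + 1 ≠ (j : ℕ) →
      (j : ℕ) + 1 ≠ (i : ℕ) → M i j = 0) :
    ∀ j : Fin n,
      M⁻¹ ⟨0, by omega⟩ j = (-1) ^ ((j : ℕ) + 1) * (2 * (n : ℚ) - 2 * (j : ℕ) - 1) / 2 ∧
      M⁻¹ ⟨n - 1, by omega⟩ j = (-1) ^ (n - (j : ℕ)) / 2 := by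
  rcases Nat.lt_or_ge n 2 with h2 | h2
  · -- n = 1 : the hypotheses are contradictory
    exfalso
    have hn1 : n = 1 := by omega
    subst hn1
    have : (-1 : ℚ) = -3 := hfirst.symm.trans hlast
    norm_num at this
  obtain ⟨p, rfl⟩ : ∃ p, n = p + 2 := ⟨n - 2, by omega⟩
  have key : M * Naux (p + 2) = 1 := by
    ext i l
    rw [Matrix.mul_apply, Matrix.one_apply]
    by_cases hi0 : (i : ℕ) = 0
    · -- first row
      have hi : i = ⟨0, by omega⟩ := Fin.ext hi0
      have e0 : M i ⟨0, by omega⟩ = -1 := by rw [hi]; exact hfirst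
      have e1 : M i ⟨1, by omega⟩ = -1 :=
        (hoff i ⟨1, by omega⟩ (by show (i : ℕ) + 1 = 1; omega)).1
      have hsub : ∀ k ∈ Finset.univ,
          k ∉ ({(⟨0, by omega⟩ : Fin (p + 2)), ⟨1, by omega⟩} : Finset (Fin (p + 2))) →
          M i k * Naux (p + 2) k l = 0 := by
        intro k _ hk
        simp only [Finset.mem_insert, Finset.mem_singleton] at hk
        push_neg at hk
        have h1 : (k : ℕ) ≠ 0 := fun h => hk.1 (Fin.ext h)
        have h2 : (k : ℕ) ≠ 1 := fun h => hk.2 (Fin.ext h)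
        rw [hzero i k (by omega) (by omega) (by omega)]
        ring
      rw [← Finset.sum_subset (Finset.subset_univ _) hsub,
        Finset.sum_insert (by
          intro hmem
          rw [Finset.mem_singleton] at hmem
          have hv : (0 : ℕ) = 1 := congrArg Fin.val hmem
          omega),
        Finset.sum_singleton, e0, e1]
      by_cases hl0 : (l : ℕ) = 0
      · rw [if_pos (Fin.ext (by omega))]
        simp only [Naux, Fin.val_mk, hl0]
        norm_num
        ring
      · rw [if_neg (fun h => hl0 (by have hv := congrArg Fin.val h; omega))]
        simp only [Naux, Fin.val_mk]
        rw [show max 0 (l : ℕ) = l from by omega,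
          show max 1 (l : ℕ) = l from by omega,
          show 1 + (l : ℕ) + 1 = (0 + l + 1) + 1 from by ring, pow_succ]
        ring
    · by_cases hin : (i : ℕ) = p + 1
      · -- last row
        have hi : i = ⟨p + 1, by omega⟩ := Fin.ext hin
        have e0 : M i ⟨p, by omega⟩ = -1 :=
          (hoff ⟨p, by omega⟩ i (by show p + 1 = (i : ℕ); omega)).2
        have e1 : M i i = -3 := by rw [hi]; exact hlast
        have hsub : ∀ k ∈ Finset.univ,
            k ∉ ({(⟨p, by omega⟩ : Fin (p + 2)), i} : Finset (Fin (p + 2))) →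
            M i k * Naux (p + 2) k l = 0 := by
          intro k _ hk
          simp only [Finset.mem_insert, Finset.mem_singleton] at hk
          push_neg at hk
          have h1 : (k : ℕ) ≠ p := fun h => hk.1 (Fin.ext h)
          have h2 : (k : ℕ) ≠ (i : ℕ) := fun h => hk.2 (Fin.ext h)
          have hk1 : (k : ℕ) < p + 2 := k.isLt
          rw [hzero i k (by omega) (by omega) (by omega)]
          ring
        rw [← Finset.sum_subset (Finset.subset_univ _) hsub,
          Finset.sum_insert (by
            intro hmem
            rw [Finset.mem_singleton] at hmem
            have hv : p = (i : ℕ) := congrArg Fin.val hmem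
            omega),
          Finset.sum_singleton, e0, e1]
        have hl : (l : ℕ) < p + 2 := l.isLt
        by_cases hlp : (l : ℕ) = p + 1
        · rw [if_pos (Fin.ext (by omega))]
          simp only [Naux, Fin.val_mk, hi, hlp]
          rw [show max p (p + 1) = p + 1 from by omega,
            show max (p + 1) (p + 1) = p + 1 from by omega,
            show p + (p + 1) + 1 = 2 * p + 2 from by ring,
            show (p + 1) + (p + 1) + 1 = 2 * p + 3 from by ring,
            pow_add, pow_add, pow_mul]
          push_cast
          norm_num
          ring
        · rw [if_neg (fun h => hlp (by have hv := congrArg Fin.val h; omega))]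
          simp only [Naux, Fin.val_mk, hi]
          rw [show max p (l : ℕ) = p from by omega,
            show max (p + 1) (l : ℕ) = p + 1 from by omega,
            show (p + 1) + (l : ℕ) + 1 = (p + l + 1) + 1 from by ring, pow_succ]
          push_cast
          ring
      · -- middle rows
        obtain ⟨q, hq⟩ : ∃ q, (i : ℕ) = q + 1 := ⟨(i : ℕ) - 1, by omega⟩
        have hqn : q + 2 ≤ p + 1 := by have := i.isLt; omega
        have e0 : M i ⟨q, by omega⟩ = -1 :=
          (hoff ⟨q, by omega⟩ i (by show q + 1 = (i : ℕ); omega)).2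
        have e1 : M i i = -2 := hdiag i (by omega) (by omega)
        have e2 : M i ⟨q + 2, by omega⟩ = -1 :=
          (hoff i ⟨q + 2, by omega⟩ (by show (i : ℕ) + 1 = q + 2; omega)).1
        have hsub : ∀ k ∈ Finset.univ,
            k ∉ ({(⟨q, by omega⟩ : Fin (p + 2)), i, ⟨q + 2, by omega⟩} :
              Finset (Fin (p + 2))) →
            M i k * Naux (p + 2) k l = 0 := by
          intro k _ hk
          simp only [Finset.mem_insert, Finset.mem_singleton] at hk
          push_neg at hk
          have h1 : (k : ℕ) ≠ q := fun h => hk.1 (Fin.ext h)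
          have h2 : (k : ℕ) ≠ (i : ℕ) := fun h => hk.2.1 (Fin.ext h)
          have h3 : (k : ℕ) ≠ q + 2 := fun h => hk.2.2 (Fin.ext h)
          rw [hzero i k (by omega) (by omega) (by omega)]
          ring
        rw [← Finset.sum_subset (Finset.subset_univ _) hsub,
          Finset.sum_insert (by
            simp only [Finset.mem_insert, Finset.mem_singleton]
            push_neg
            constructor
            · intro hmem; have hv : q = (i : ℕ) := congrArg Fin.val hmem; omega
            · intro hmem; have hv : (q : ℕ) = q + 2 := congrArg Fin.val hmem; omega),
          Finset.sum_insert (by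
            intro hmem
            rw [Finset.mem_singleton] at hmem
            have hv : (i : ℕ) = q + 2 := congrArg Fin.val hmem
            omega),
          Finset.sum_singleton, e0, e1, e2]
        have hl : (l : ℕ) < p + 2 := l.isLt
        rcases lt_trichotomy (l : ℕ) (q + 1) with hlq | hlq | hlq
        · rw [if_neg (fun h => absurd (congrArg Fin.val h) (by omega))]
          simp only [Naux, Fin.val_mk, hq]
          rw [show max q (l : ℕ) = q from by omega,
            show max (q + 1) (l : ℕ) = q + 1 from by omega,
            show max (q + 2) (l : ℕ) = q + 2 from by omega,
            show (q + 1) + (l : ℕ) + 1 = (q + l + 1) + 1 from by ring,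
            show (q + 2) + (l : ℕ) + 1 = (q + l + 1) + 1 + 1 from by ring,
            pow_succ, pow_succ]
          push_cast
          ring
        · rw [if_pos (Fin.ext (by omega))]
          simp only [Naux, Fin.val_mk, hq, hlq]
          rw [show max q (q + 1) = q + 1 from by omega,
            show max (q + 1) (q + 1) = q + 1 from by omega,
            show max (q + 2) (q + 1) = q + 2 from by omega,
            show q + (q + 1) + 1 = 2 * q + 2 from by ring,
            show (q + 1) + (q + 1) + 1 = 2 * q + 3 from by ring,
            show (q + 2) + (q + 1) + 1 = 2 * q + 4 from by ring,
            pow_add, pow_add, pow_add, pow_mul]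
          push_cast
          norm_num
          ring
        · rw [if_neg (fun h => absurd (congrArg Fin.val h) (by omega))]
          simp only [Naux, Fin.val_mk, hq]
          rw [show max q (l : ℕ) = l from by omega,
            show max (q + 1) (l : ℕ) = l from by omega,
            show max (q + 2) (l : ℕ) = l from by omega,
            show (q + 1) + (l : ℕ) + 1 = (q + l + 1) + 1 from by ring,
            show (q + 2) + (l : ℕ) + 1 = (q + l + 1) + 1 + 1 from by ring,
            pow_succ, pow_succ]
          push_cast
          ring
  have hinv : M⁻¹ = Naux (p + 2) := Matrix.inv_eq_right_inv key
  intro j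
  have hj : (j : ℕ) < p + 2 := j.isLt
  constructor
  · rw [hinv]
    simp only [Naux, Fin.val_mk]
    rw [show max 0 (j : ℕ) = j from by omega]
    ring
  · rw [hinv]
    simp only [Naux, Fin.val_mk]
    rw [show p + 2 - 1 = p + 1 from by omega,
      show max (p + 1) (j : ℕ) = p + 1 from by omega,
      show (p + 1) + (j : ℕ) + 1 = (p + 2 - (j : ℕ)) + 2 * (j : ℕ) from by omega,
      pow_add, pow_mul]
    push_cast
    norm_num
    ring
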